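/- Let n ≥ 3 be an integer, let f : ℝ → ℝ be continuously differentiable, and let F(u) = ∫₀ᵘ f(t) dt. Let u ∈ C²([0,1]) satisfy u''(r) + ((n-1)/r) u'(r) + f(u(r)) = 0 for 0 < r < 1, with u'(0) = u(1) = 0. Then (4n−4) ∫₀¹ F(u(r)) r^{2n-3} dr = (u'(1))². -/

import Mathlib

open Set Real

/-- The Pohozhaev-type identity for `ψ(r) = r^{n-1}` (used by
Peletier and Serrin): `(4n-4) ∫₀¹ F(u(r)) r^{2n-3} dr = u'(1)²`. -/
theorem pohozhaev_peletier_serrin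
    (n : ℕ) (hn : 3 ≤ n)
    (f : ℝ → ℝ) (hf : ContDiff ℝ 1 f)
    (F : ℝ → ℝ) (hF : ∀ x : ℝ, F x = ∫ t in (0:ℝ)..x, f t)
    (u u' u'' : ℝ → ℝ)
    (hu : ∀ r ∈ Icc (0:ℝ) 1, HasDerivAt u (u' r) r)
    (hu' : ∀ r ∈ Icc (0:ℝ) 1, HasDerivAt u' (u'' r) r)
    (hu''c : ContinuousOn u'' (Icc (0:ℝ) 1))
    (hode : ∀ r ∈ Ioo (0:ℝ) 1, u'' r + ((n : ℝ) - 1) / r * u' r + f (u r) = 0)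
    (hbc0 : u' 0 = 0) (hbc1 : u 1 = 0) :
    (4 * (n : ℝ) - 4) * ∫ r in (0:ℝ)..1, F (u r) * r ^ (2 * n - 3)
      = (u' 1) ^ 2 := by
  set a : ℕ := 2 * n - 3 with ha
  have ha1 : 2 * n - 2 = a + 1 := by omega
  have haR : (a : ℝ) = 2 * (n : ℝ) - 3 := by
    have h3 : (3 : ℕ) ≤ 2 * n := by omega
    push_cast [ha, Nat.cast_sub h3]; ring
  have hfc : Continuous f := hf.continuous
  have hFderiv : ∀ x : ℝ, HasDerivAt F (f x) x := by
    intro x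
    have hEq : F = fun y => ∫ t in (0:ℝ)..y, f t := funext hF
    rw [hEq]
    exact intervalIntegral.integral_hasDerivAt_right
      (hfc.intervalIntegrable 0 x) (hfc.stronglyMeasurableAtFilter _ _)
      hfc.continuousAt
  have hFc : Continuous F := by
    rw [continuous_iff_continuousAt]
    exact fun x => (hFderiv x).continuousAt
  have hucont : ContinuousOn u (Icc (0:ℝ) 1) :=
    fun r hr => (hu r hr).continuousAt.continuousWithinAt
  have hu'cont : ContinuousOn u' (Icc (0:ℝ) 1) :=
    fun r hr => (hu' r hr).continuousAt.continuousWithinAt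
  set G : ℝ → ℝ := fun r => r ^ (a + 1) * ((u' r) ^ 2 + 2 * F (u r)) with hG
  have hGcont : ContinuousOn G (Icc (0:ℝ) 1) := by
    apply ContinuousOn.mul (Continuous.continuousOn (by continuity))
    exact (hu'cont.pow 2).add (continuousOn_const.mul (hFc.comp_continuousOn hucont))
  have hGderiv : ∀ r ∈ Ioo (0:ℝ) 1,
      HasDerivAt G ((4 * (n : ℝ) - 4) * (F (u r) * r ^ a)) r := by
    intro r hr
    have hrI : r ∈ Icc (0:ℝ) 1 := Ioo_subset_Icc_self hr
    have hr0 : r ≠ 0 := ne_of_gt hr.1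
    have hpow : HasDerivAt (fun s : ℝ => s ^ (a + 1)) (((a:ℝ) + 1) * r ^ a) r := by
      simpa using hasDerivAt_pow (a + 1) r
    have h1 : HasDerivAt (fun s => (u' s) ^ 2) (2 * u' r ^ 1 * u'' r) r :=
      (hu' r hrI).pow 2
    have h2 : HasDerivAt (fun s => F (u s)) (f (u r) * u' r) r :=
      (hFderiv (u r)).comp r (hu r hrI)
    have hD := hpow.mul (h1.add (h2.const_mul 2))
    have hq : u'' r = -(((n : ℝ) - 1) / r * u' r + f (u r)) := by
      have := hode r hr; linarith
    convert hD using 1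
    · rfl
    · rfl
    · rfl
    rw [hq, haR]
    simp only [Pi.add_apply]
    have hps : r ^ (a + 1) = r ^ a * r := pow_succ r a
    field_simp
    ring
  have hgint : IntervalIntegrable
      (fun r => (4 * (n : ℝ) - 4) * (F (u r) * r ^ a)) MeasureTheory.volume 0 1 := by
    apply ContinuousOn.intervalIntegrable
    rw [uIcc_of_le zero_le_one]
    exact continuousOn_const.mul ((hFc.comp_continuousOn hucont).mul
      ((continuous_pow a).continuousOn))
  have key := intervalIntegral.integral_eq_sub_of_hasDerivAt_of_le zero_le_one
    hGcont hGderiv hgint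
  have hG1 : G 1 = (u' 1) ^ 2 := by
    simp [hG, hbc1, hF 0]
  have hG0 : G 0 = 0 := by
    simp [hG]
  rw [intervalIntegral.integral_const_mul, hG1, hG0, sub_zero] at key
  rw [← key]
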